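/- Let G be an infinite group with a finite generating set A (with A injective, so the generators are pairwise distinct) and let Γ = C(G;A) be its right Cayley graph. Then ι*(G;A) ≥ 1 if and only if there exists a set S of directed edges of Γ such that every vertex v of Γ is the initial vertex of only finitely many edges of S and the terminal vertex of only finitely many edges of S, and for every vertex v the number of edges of S with initial vertex v exceeds the number of edges of S with terminal vertex v by at least 1. -/

import Mathlib

/-- The group element corresponding to a letter `(i, b)`: the generator `A i` itself if
`b = true`, and its inverse if `b = false`. -/
def genOf {G : Type*} [Group G] {ι : Type*} (A : ι → G) : ι × Bool → G :=
  fun s => if s.2 then A s.1 else (A s.1)⁻¹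

/-- The Cheeger boundary of a finite set `Y` in the right Cayley graph of `G` with respect to
the generating family `A`: the set of directed edges `(g, s)` (an edge labelled by the letter
`s` going from `g` to `g * genOf A s`) with initial vertex in `Y` and terminal vertex
outside `Y`. -/
def cheegerBoundary {G : Type*} [Group G] {ι : Type*} (A : ι → G) (Y : Finset G) :
    Set (G × ι × Bool) :=
  {e | e.1 ∈ Y ∧ e.1 * genOf A e.2 ∉ Y}

/-- The Cheeger isoperimetric constant `ι*(G; A)`: the infimum over all finite nonempty
subsets `Y ⊆ G` of `|∂*Y| / |Y|`. -/
noncomputable def cheegerConst {G : Type*} [Group G] {ι : Type*} (A : ι → G) : ℝ :=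
  ⨅ Y : {Y : Finset G // Y.Nonempty},
    (Nat.card (cheegerBoundary A Y.1) : ℝ) / ((Y.1.card : ℝ))

set_option linter.unusedSectionVars false
set_option maxHeartbeats 1000000

namespace EvacProof

open scoped Classical

variable {G : Type*} [Group G] {ι : Type*} [Fintype ι] (A : ι → G)

def hd (e : G × ι × Bool) : G := e.1 * genOf A e.2

noncomputable def outC (S : Finset (G × ι × Bool)) (v : G) : ℕ :=
  (S.filter fun e => e.1 = v).card

noncomputable def inC (S : Finset (G × ι × Bool)) (v : G) : ℕ :=
  (S.filter fun e => hd A e = v).card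

noncomputable def ex (S : Finset (G × ι × Bool)) (v : G) : ℤ :=
  (outC S v : ℤ) - (inC A S v : ℤ)

def nxt (x : G) (st : Bool × ι × Bool) : G :=
  if st.1 then x * genOf A st.2 else x * (genOf A st.2)⁻¹

def edg (x : G) (st : Bool × ι × Bool) : G × ι × Bool :=
  if st.1 then (x, st.2) else (x * (genOf A st.2)⁻¹, st.2)

def Valid (F : Finset G) (S : Finset (G × ι × Bool)) : G → List (Bool × ι × Bool) → G → Prop
  | x, [], z => x = z
  | x, st :: L, z => x ∈ F ∧ (if st.1 then edg A x st ∉ S else edg A x st ∈ S) ∧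
      Valid F S (nxt A x st) L z

def edges : G → List (Bool × ι × Bool) → List (G × ι × Bool)
  | _, [] => []
  | x, st :: L => edg A x st :: edges (nxt A x st) L

lemma hd_edg (x : G) (st : Bool × ι × Bool) :
    hd A (edg A x st) = if st.1 then x * genOf A st.2 else x := by
  cases h : st.1 <;> simp [hd, edg, h]

lemma fst_edg (x : G) (st : Bool × ι × Bool) :
    (edg A x st).1 = if st.1 then x else x * (genOf A st.2)⁻¹ := by
  cases h : st.1 <;> simp [edg, h]

lemma card_filter_insert {S : Finset (G × ι × Bool)} {e : G × ι × Bool} (he : e ∉ S)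
    (p : (G × ι × Bool) → Prop) :
    ((insert e S).filter (fun x => p x)).card
      = (S.filter (fun x => p x)).card + (if p e then 1 else 0) := by
  rw [Finset.filter_insert]
  split_ifs with h
  · rw [Finset.card_insert_of_notMem (fun hc => he (Finset.mem_filter.1 hc).1)]
  · rfl

lemma ex_insert {S : Finset (G × ι × Bool)} {e : G × ι × Bool} (he : e ∉ S) (v : G) :
    ex A (insert e S) v = ex A S v + (if e.1 = v then 1 else 0)
      - (if hd A e = v then 1 else 0) := by
  unfold ex outC inC
  rw [card_filter_insert he (fun e => e.1 = v), card_filter_insert he (fun e => hd A e = v)]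
  split_ifs <;> push_cast <;> ring

lemma ex_erase {S : Finset (G × ι × Bool)} {e : G × ι × Bool} (he : e ∈ S) (v : G) :
    ex A (S.erase e) v = ex A S v - (if e.1 = v then 1 else 0)
      + (if hd A e = v then 1 else 0) := by
  have h1 : S = insert e (S.erase e) := (Finset.insert_erase he).symm
  have h2 := ex_insert A (S.notMem_erase e) v
  rw [← h1] at h2
  rw [h2]; ring

lemma valid_append {F : Finset G} {S : Finset (G × ι × Bool)} :
    ∀ {L₁ L₂ : List (Bool × ι × Bool)} {x y z : G},
      Valid A F S x L₁ y → Valid A F S y L₂ z → Valid A F S x (L₁ ++ L₂) z := by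
  intro L₁
  induction L₁ with
  | nil => intro L₂ x y z h1 h2; cases h1; exact h2
  | cons st L ih =>
    intro L₂ x y z h1 h2
    exact ⟨h1.1, h1.2.1, ih h1.2.2 h2⟩

/-- toggling an edge not appearing among the underlying edges of a valid path
preserves validity -/
lemma valid_insert_of_not_mem {F : Finset G} {S : Finset (G × ι × Bool)}
    {e : G × ι × Bool} :
    ∀ {L : List (Bool × ι × Bool)} {x z : G}, Valid A F S x L z →
      e ∉ edges A x L → Valid A F (insert e S) x L z := by
  intro L
  induction L with
  | nil => intro x z h _; exact h
  | cons st L ih =>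
    intro x z h hne
    simp only [edges, List.mem_cons, not_or] at hne
    refine ⟨h.1, ?_, ih h.2.2 hne.2⟩
    have hcond := h.2.1
    split_ifs with hs
    · rw [if_pos hs] at hcond
      simp only [Finset.mem_insert, not_or]
      exact ⟨fun hc => hne.1 hc.symm, hcond⟩
    · rw [if_neg hs] at hcond
      exact Finset.mem_insert_of_mem hcond

lemma valid_erase_of_not_mem {F : Finset G} {S : Finset (G × ι × Bool)}
    {e : G × ι × Bool} :
    ∀ {L : List (Bool × ι × Bool)} {x z : G}, Valid A F S x L z →
      e ∉ edges A x L → Valid A F (S.erase e) x L z := by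
  intro L
  induction L with
  | nil => intro x z h _; exact h
  | cons st L ih =>
    intro x z h hne
    simp only [edges, List.mem_cons, not_or] at hne
    refine ⟨h.1, ?_, ih h.2.2 hne.2⟩
    have hcond := h.2.1
    split_ifs with hs
    · rw [if_pos hs] at hcond
      exact fun hc => hcond (Finset.mem_of_mem_erase hc)
    · rw [if_neg hs] at hcond
      exact Finset.mem_erase_of_ne_of_mem (fun hc => hne.1 hc.symm) hcond


/-- split a valid path at an occurrence of an underlying edge -/
lemma valid_split {F : Finset G} {S : Finset (G × ι × Bool)} {e : G × ι × Bool} :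
    ∀ (M : List (Bool × ι × Bool)) (w z : G), Valid A F S w M z → e ∈ edges A w M →
      ∃ M₁ st₂ M₂ y, M = M₁ ++ st₂ :: M₂ ∧ Valid A F S y (st₂ :: M₂) z ∧
        edg A y st₂ = e ∧ edges A w M = edges A w M₁ ++ edges A y (st₂ :: M₂) := by
  intro M
  induction M with
  | nil => intro w z _ he; simp [edges] at he
  | cons st M ih =>
    intro w z h he
    by_cases hc : e = edg A w st
    · exact ⟨[], st, M, w, rfl, h, hc.symm, by simp [edges]⟩
    · have he' : e ∈ edges A (nxt A w st) M := by
        simp only [edges, List.mem_cons] at he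
        tauto
      obtain ⟨M₁, st₂, M₂, y, hM, hv, hedg, hedges⟩ := ih (nxt A w st) z h.2.2 he'
      refine ⟨st :: M₁, st₂, M₂, y, by rw [hM]; rfl, hv, hedg, ?_⟩
      simp only [edges, List.cons_append, List.cons.injEq, true_and]
      exact hedges

/-- from any valid path we can extract one whose underlying edges are distinct -/
lemma exists_nodup_path {F : Finset G} {S : Finset (G × ι × Bool)} :
    ∀ (n : ℕ) (L : List (Bool × ι × Bool)) (x z : G), L.length ≤ n →
      Valid A F S x L z →
      ∃ L', Valid A F S x L' z ∧ (edges A x L').Nodup ∧ L'.length ≤ L.length := by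
  intro n
  induction n with
  | zero =>
    intro L x z hlen h
    rw [Nat.le_zero, List.length_eq_zero_iff] at hlen
    subst hlen
    exact ⟨[], h, by simp [edges], by simp⟩
  | succ n ih =>
    intro L x z hlen h
    match L with
    | [] => exact ⟨[], h, by simp [edges], by simp⟩
    | st :: M =>
      have hM : M.length ≤ n := by simpa using hlen
      obtain ⟨M', hv', hnd', hlen'⟩ := ih M (nxt A x st) z hM h.2.2
      by_cases hmem : edg A x st ∈ edges A (nxt A x st) M'
      · -- splice
        obtain ⟨M₁, st₂, M₂, y, hM', hv₂, hedg, hedges⟩ :=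
          valid_split A M' (nxt A x st) z hv' hmem
        -- show y = x and st₂ "equals" st in effect
        have hcond := h.2.1
        have hcond₂ := hv₂.2.1
        have hyx : y = x ∧ nxt A y st₂ = nxt A x st := by
          rcases hb : st.1 with _ | _ <;> rcases hb₂ : st₂.1 with _ | _
          · -- both backward
            rw [edg, if_neg (by simp [hb₂]), edg, if_neg (by simp [hb])] at hedg
            rw [Prod.mk.injEq] at hedg
            have h2 : st₂.2 = st.2 := hedg.2
            have h1 := hedg.1
            rw [h2] at h1
            have hy : y = x := mul_left_injective _ h1
            constructor
            · exact hy
            · rw [nxt, if_neg (by simp [hb₂]), nxt, if_neg (by simp [hb]), h2, hy]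
          · -- st backward (∈ S), st₂ forward (∉ S): contradiction
            rw [if_neg (by simp [hb])] at hcond
            rw [if_pos (by simp [hb₂]), hedg] at hcond₂
            exact absurd hcond hcond₂
          · rw [if_pos (by simp [hb])] at hcond
            rw [if_neg (by simp [hb₂]), hedg] at hcond₂
            exact absurd hcond₂ hcond
          · -- both forward
            rw [edg, if_pos (by simp [hb₂]), edg, if_pos (by simp [hb])] at hedg
            rw [Prod.mk.injEq] at hedg
            have h2 : st₂.2 = st.2 := hedg.2
            have hy : y = x := hedg.1
            constructor
            · exact hy
            · rw [nxt, if_pos (by simp [hb₂]), nxt, if_pos (by simp [hb]), h2, hy]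
        refine ⟨st₂ :: M₂, ?_, ?_, ?_⟩
        · rw [← hyx.1]; exact hv₂
        · have : edges A x (st₂ :: M₂) = edges A y (st₂ :: M₂) := by rw [hyx.1]
          rw [this]
          have hsub : edges A y (st₂ :: M₂) <:+ edges A (nxt A x st) M' := ⟨_, hedges.symm⟩
          exact hnd'.sublist hsub.sublist
        · have : M'.length = M₁.length + (M₂.length + 1) := by rw [hM']; simp
          simp only [List.length_cons]
          omega
      · exact ⟨st :: M', ⟨h.1, h.2.1, hv'⟩, by
          simp only [edges, List.nodup_cons]; exact ⟨hmem, hnd'⟩, by simpa using hlen'⟩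


/-- augmenting along an edge-distinct valid path -/
lemma augment {F : Finset G} :
    ∀ (L : List (Bool × ι × Bool)) (S : Finset (G × ι × Bool)) (x z : G),
      Valid A F S x L z → (edges A x L).Nodup → (∀ e ∈ S, e.1 ∈ F) →
      ∃ S', (∀ e ∈ S', e.1 ∈ F) ∧
        ∀ v, ex A S' v = ex A S v + (if v = x then 1 else 0) - (if v = z then 1 else 0) := by
  intro L
  induction L with
  | nil =>
    intro S x z hv _ hS
    cases hv
    exact ⟨S, hS, fun v => by ring⟩
  | cons st M ih =>
    intro S x z hv hnd hS
    have hxF : x ∈ F := hv.1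
    have hcond := hv.2.1
    simp only [edges, List.nodup_cons] at hnd
    -- the toggled set
    rcases hb : st.1 with _ | _
    · -- backward step : erase the edge
      rw [if_neg (by simp [hb])] at hcond
      set e₁ := edg A x st with he₁
      have hfst : e₁.1 = x * (genOf A st.2)⁻¹ := by rw [he₁, fst_edg, if_neg (by simp [hb])]
      have hhd : hd A e₁ = x := by rw [he₁, hd_edg, if_neg (by simp [hb])]
      have hnxt : nxt A x st = x * (genOf A st.2)⁻¹ := by rw [nxt, if_neg (by simp [hb])]
      have hv' : Valid A F (S.erase e₁) (nxt A x st) M z :=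
        valid_erase_of_not_mem A hv.2.2 hnd.1
      have hS' : ∀ e ∈ S.erase e₁, e.1 ∈ F := fun e he => hS e (Finset.mem_of_mem_erase he)
      obtain ⟨S', hS'F, hex⟩ := ih (S.erase e₁) (nxt A x st) z hv' hnd.2 hS'
      refine ⟨S', hS'F, fun v => ?_⟩
      have e1 : (x * (genOf A st.2)⁻¹ = v) = (v = x * (genOf A st.2)⁻¹) := propext eq_comm
      have e2 : (x = v) = (v = x) := propext eq_comm
      rw [hex v, ex_erase A hcond v, hfst, hhd, hnxt, e1, e2]
      split_ifs <;> ring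
    · -- forward step : insert the edge
      rw [if_pos (by simp [hb])] at hcond
      set e₁ := edg A x st with he₁
      have hfst : e₁.1 = x := by rw [he₁, fst_edg, if_pos (by simp [hb])]
      have hhd : hd A e₁ = x * genOf A st.2 := by rw [he₁, hd_edg, if_pos (by simp [hb])]
      have hnxt : nxt A x st = x * genOf A st.2 := by rw [nxt, if_pos (by simp [hb])]
      have hv' : Valid A F (insert e₁ S) (nxt A x st) M z :=
        valid_insert_of_not_mem A hv.2.2 hnd.1
      have hS' : ∀ e ∈ insert e₁ S, e.1 ∈ F := by
        intro e he
        rcases Finset.mem_insert.1 he with rfl | he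
        · rw [hfst]; exact hxF
        · exact hS e he
      obtain ⟨S', hS'F, hex⟩ := ih (insert e₁ S) (nxt A x st) z hv' hnd.2 hS'
      refine ⟨S', hS'F, fun v => ?_⟩
      have e1 : (x * genOf A st.2 = v) = (v = x * genOf A st.2) := propext eq_comm
      have e2 : (x = v) = (v = x) := propext eq_comm
      rw [hex v, ex_insert A hcond v, hfst, hhd, hnxt, e1, e2]
      split_ifs <;> ring


noncomputable def bFinset (Y : Finset G) : Finset (G × ι × Bool) :=
  (Y ×ˢ (Finset.univ : Finset (ι × Bool))).filter fun e => e.1 * genOf A e.2 ∉ Y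

lemma mem_bFinset {Y : Finset G} {e : G × ι × Bool} :
    e ∈ bFinset A Y ↔ e.1 ∈ Y ∧ e.1 * genOf A e.2 ∉ Y := by
  simp [bFinset, Finset.mem_product]

lemma sum_outC (S : Finset (G × ι × Bool)) (Y : Finset G) :
    ∑ v ∈ Y, outC S v = (S.filter fun e => e.1 ∈ Y).card := by
  have key := Finset.card_eq_sum_card_fiberwise (f := fun e : G × ι × Bool => e.1)
    (s := S.filter (fun e => e.1 ∈ Y)) (t := Y)
    (fun e he => (Finset.mem_filter.1 he).2)
  rw [key]
  refine Finset.sum_congr rfl fun v hv => ?_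
  unfold outC
  congr 1
  rw [Finset.filter_filter]
  apply Finset.filter_congr
  intro e _
  constructor
  · intro h; exact ⟨by rw [h]; exact hv, h⟩
  · intro h; exact h.2

lemma sum_inC (S : Finset (G × ι × Bool)) (Y : Finset G) :
    ∑ v ∈ Y, inC A S v = (S.filter fun e => hd A e ∈ Y).card := by
  have key := Finset.card_eq_sum_card_fiberwise (f := fun e : G × ι × Bool => hd A e)
    (s := S.filter (fun e => hd A e ∈ Y)) (t := Y)
    (fun e he => (Finset.mem_filter.1 he).2)
  rw [key]
  refine Finset.sum_congr rfl fun v hv => ?_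
  unfold inC
  congr 1
  rw [Finset.filter_filter]
  apply Finset.filter_congr
  intro e _
  constructor
  · intro h; exact ⟨by rw [h]; exact hv, h⟩
  · intro h; exact h.2


lemma stage (hiso : ∀ Y : Finset G, Y.Nonempty → Y.card ≤ (bFinset A Y).card) (F : Finset G) :
    ∀ F₀ : Finset G, F₀ ⊆ F → ∃ S : Finset (G × ι × Bool),
      (∀ e ∈ S, e.1 ∈ F) ∧ (∀ v ∈ F₀, ex A S v = 1) ∧
        (∀ v ∈ F, v ∉ F₀ → ex A S v = 0) := by
  intro F₀
  induction F₀ using Finset.induction_on with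
  | empty =>
    intro _
    exact ⟨∅, by simp, by simp, fun v _ _ => by simp [ex, outC, inC]⟩
  | @insert u F₁ hu ih =>
    intro hsub
    have hF₁ : F₁ ⊆ F := fun x hx => hsub (Finset.mem_insert_of_mem hx)
    have huF : u ∈ F := hsub (Finset.mem_insert_self u F₁)
    obtain ⟨S, hStails, hSone, hSzero⟩ := ih hF₁
    by_cases hreach : ∃ z L, Valid A F S u L z ∧ z ∉ F
    · -- augmenting path exists
      obtain ⟨z, L, hvz, hzF⟩ := hreach
      obtain ⟨L', hv', hnd', _⟩ := exists_nodup_path A L.length L u z le_rfl hvz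
      obtain ⟨S', hS'F, hex⟩ := augment A L' S u z hv' hnd' hStails
      have hzu : z ≠ u := fun hc => hzF (hc ▸ huF)
      refine ⟨S', hS'F, ?_, ?_⟩
      · intro v hv
        rcases Finset.mem_insert.1 hv with hvu | hv
        · have hvF : v ∈ F := by rw [hvu]; exact huF
          have hvz : ¬ (v = z) := fun hc => hzF (hc ▸ hvF)
          have hv0 : ex A S v = 0 := by rw [hvu]; exact hSzero u huF hu
          rw [hex v, hv0, if_pos hvu, if_neg hvz]
          ring
        · have hvu : v ≠ u := fun hc => hu (hc ▸ hv)
          have hvz' : v ≠ z := fun hc => hzF (hc ▸ hF₁ hv)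
          rw [hex v, hSone v hv, if_neg hvu, if_neg hvz']
          ring
      · intro v hvF hvn
        have hvu : v ≠ u := fun hc => hvn (hc ▸ Finset.mem_insert_self u F₁)
        have hv₁ : v ∉ F₁ := fun hc => hvn (Finset.mem_insert_of_mem hc)
        have hvz' : v ≠ z := fun hc => hzF (hc ▸ hvF)
        rw [hex v, hSzero v hvF hv₁, if_neg hvu, if_neg hvz']
        ring
    · -- no augmenting path : contradiction with the isoperimetric inequality
      exfalso
      push_neg at hreach
      obtain ⟨Y, hmemY⟩ : ∃ Y : Finset G,
          ∀ x : G, x ∈ Y ↔ x ∈ F ∧ ∃ L, Valid A F S u L x :=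
        ⟨F.filter (fun x => ∃ L, Valid A F S u L x), fun x => by simp⟩
      have huY : u ∈ Y := (hmemY u).2 ⟨huF, [], rfl⟩
      have claim1 : ∀ e : G × ι × Bool, e.1 ∈ Y → e.1 * genOf A e.2 ∉ Y → e ∈ S := by
        intro e heY hhd
        by_contra heS
        obtain ⟨-, L, hL⟩ := (hmemY e.1).1 heY
        have hxF : e.1 ∈ F := ((hmemY e.1).1 heY).1
        have hstep : Valid A F S e.1 [(true, e.2)] (e.1 * genOf A e.2) := by
          refine ⟨hxF, ?_, rfl⟩
          rw [if_pos rfl]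
          simpa [edg] using heS
        have hval : Valid A F S u (L ++ [(true, e.2)]) (e.1 * genOf A e.2) :=
          valid_append A hL hstep
        have hin : e.1 * genOf A e.2 ∈ F := hreach _ _ hval
        exact hhd ((hmemY _).2 ⟨hin, _, hval⟩)
      have claim2 : ∀ e ∈ S, e.1 * genOf A e.2 ∈ Y → e.1 ∈ Y := by
        intro e heS hhd
        obtain ⟨hhF, L, hL⟩ := (hmemY _).1 hhd
        have hstep : Valid A F S (e.1 * genOf A e.2) [(false, e.2)] e.1 := by
          refine ⟨hhF, ?_, ?_⟩
          · rw [if_neg (by simp)]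
            simpa [edg, mul_assoc] using heS
          · show nxt A (e.1 * genOf A e.2) (false, e.2) = e.1
            simp [nxt, mul_assoc]
        have hval : Valid A F S u (L ++ [(false, e.2)]) e.1 := valid_append A hL hstep
        exact (hmemY _).2 ⟨hStails e heS, _, hval⟩
      have hsubio : S.filter (fun e => hd A e ∈ Y) ⊆ S.filter (fun e => e.1 ∈ Y) := by
        intro e he
        rw [Finset.mem_filter] at he ⊢
        exact ⟨he.1, claim2 e he.1 he.2⟩
      have hsdiff : S.filter (fun e => e.1 ∈ Y) \ S.filter (fun e => hd A e ∈ Y)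
          = bFinset A Y := by
        ext e
        rw [Finset.mem_sdiff, Finset.mem_filter, Finset.mem_filter, mem_bFinset]
        constructor
        · rintro ⟨⟨heS, heY⟩, hn⟩
          exact ⟨heY, fun hc => hn ⟨heS, hc⟩⟩
        · rintro ⟨heY, hhd⟩
          have heS := claim1 e heY hhd
          exact ⟨⟨heS, heY⟩, fun hc => hhd hc.2⟩
      have hcards := Finset.card_sdiff_add_card_eq_card hsubio
      have h1 : (∑ v ∈ Y, (outC S v : ℤ))
          = ((S.filter (fun e => e.1 ∈ Y)).card : ℤ) := by
        rw [← Nat.cast_sum, sum_outC]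
      have h2 : (∑ v ∈ Y, (inC A S v : ℤ))
          = ((S.filter (fun e => hd A e ∈ Y)).card : ℤ) := by
        rw [← Nat.cast_sum, sum_inC]
      have hsum : ∑ v ∈ Y, ex A S v
          = ((S.filter (fun e => e.1 ∈ Y)).card : ℤ)
            - ((S.filter (fun e => hd A e ∈ Y)).card : ℤ) := by
        unfold ex
        rw [Finset.sum_sub_distrib, h1, h2]
      have hlow : (Y.card : ℤ) ≤ ∑ v ∈ Y, ex A S v := by
        rw [hsum]
        have := hiso Y ⟨u, huY⟩
        rw [← hsdiff] at this
        omega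
      have hup : ∑ v ∈ Y, ex A S v ≤ (Y.card : ℤ) - 1 := by
        have hpt : ∀ v ∈ Y, ex A S v = if v ∈ F₁ then 1 else 0 := by
          intro v hv
          obtain ⟨hvF, -⟩ := (hmemY v).1 hv
          by_cases h1 : v ∈ F₁
          · rw [if_pos h1]; exact hSone v h1
          · rw [if_neg h1]; exact hSzero v hvF h1
        rw [Finset.sum_congr rfl hpt, Finset.sum_ite_mem]
        have hYF₁ : Y ∩ F₁ ⊆ Y.erase u := by
          intro x hx
          rw [Finset.mem_inter] at hx
          exact Finset.mem_erase_of_ne_of_mem (fun hc => hu (hc ▸ hx.2)) hx.1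
        have h1 : (Y ∩ F₁).card ≤ (Y.erase u).card := Finset.card_le_card hYF₁
        have h2 : (Y.erase u).card = Y.card - 1 := Finset.card_erase_of_mem huY
        have h3 : 1 ≤ Y.card := Finset.card_pos.2 ⟨u, huY⟩
        have h4 : ∑ _x ∈ Y ∩ F₁, (1 : ℤ) = (Y ∩ F₁).card := by simp
        rw [h4]
        omega
      omega

lemma natCard_boundary (Y : Finset G) :
    Nat.card (cheegerBoundary A Y) = (bFinset A Y).card := by
  have h : cheegerBoundary A Y = ↑(bFinset A Y) := by
    ext e
    simp only [cheegerBoundary, Set.mem_setOf_eq, Finset.coe_filter, bFinset,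
      Finset.mem_product, Finset.mem_univ, and_true, Finset.mem_coe, Finset.mem_filter]
  rw [h, Nat.card_coe_set_eq, Set.ncard_coe_finset]

/-- the `⇐` direction: the isoperimetric inequality from an evacuation edge set -/
lemma backward_bound (S : Set (G × ι × Bool))
    (h : ∀ v : G, {e ∈ S | e.1 = v}.Finite ∧ {e ∈ S | e.1 * genOf A e.2 = v}.Finite ∧
      Nat.card {e ∈ S | e.1 * genOf A e.2 = v} + 1 ≤ Nat.card {e ∈ S | e.1 = v})
    (Y : Finset G) (hY : Y.Nonempty) : Y.card ≤ (bFinset A Y).card := by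
  set Ov : G → Finset (G × ι × Bool) := fun v => ((h v).1).toFinset with hOv
  set Iv : G → Finset (G × ι × Bool) := fun v => ((h v).2.1).toFinset with hIv
  have hmemOv : ∀ v e, e ∈ Ov v ↔ e ∈ S ∧ e.1 = v := by
    intro v e; rw [hOv]; exact (h v).1.mem_toFinset
  have hmemIv : ∀ v e, e ∈ Iv v ↔ e ∈ S ∧ e.1 * genOf A e.2 = v := by
    intro v e; rw [hIv]; exact (h v).2.1.mem_toFinset
  have hcard : ∀ v, (Iv v).card + 1 ≤ (Ov v).card := by
    intro v
    have := (h v).2.2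
    rwa [Nat.card_coe_set_eq, Nat.card_coe_set_eq,
      Set.ncard_eq_toFinset_card _ (h v).2.1, Set.ncard_eq_toFinset_card _ (h v).1]
      at this
  set Tout := Y.biUnion Ov with hTout
  set Tin := Y.biUnion Iv with hTin
  have h1 : Tout.card = ∑ v ∈ Y, (Ov v).card := by
    rw [hTout]
    apply Finset.card_biUnion
    intro a _ b _ hab
    rw [Function.onFun, Finset.disjoint_left]
    intro e hea heb
    exact hab (((hmemOv a e).1 hea).2.symm.trans ((hmemOv b e).1 heb).2)
  have h2 : Tin.card = ∑ v ∈ Y, (Iv v).card := by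
    rw [hTin]
    apply Finset.card_biUnion
    intro a _ b _ hab
    rw [Function.onFun, Finset.disjoint_left]
    intro e hea heb
    exact hab (((hmemIv a e).1 hea).2.symm.trans ((hmemIv b e).1 heb).2)
  have h3 : Tin.card + Y.card ≤ Tout.card := by
    rw [h1, h2]
    have hs : ∑ v ∈ Y, ((Iv v).card + 1) ≤ ∑ v ∈ Y, (Ov v).card :=
      Finset.sum_le_sum (fun v _ => hcard v)
    rwa [Finset.sum_add_distrib, Finset.sum_const, smul_eq_mul, mul_one] at hs
  have h4 : Tout.card ≤ (Tout \ Tin).card + Tin.card :=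
    Finset.card_le_card_sdiff_add_card
  have h5 : Tout \ Tin ⊆ bFinset A Y := by
    intro e he
    rw [Finset.mem_sdiff] at he
    obtain ⟨v, hvY, hev⟩ := Finset.mem_biUnion.1 he.1
    obtain ⟨heS, hfst⟩ := (hmemOv v e).1 hev
    rw [mem_bFinset]
    refine ⟨hfst ▸ hvY, fun hc => ?_⟩
    exact he.2 (Finset.mem_biUnion.2 ⟨_, hc, (hmemIv _ e).2 ⟨heS, rfl⟩⟩)
  have h6 := Finset.card_le_card h5
  omega

noncomputable def Dv (v : G) : Finset (G × ι × Bool) :=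
  ({v} ×ˢ (Finset.univ : Finset (ι × Bool))) ∪
    (Finset.univ.image fun s : ι × Bool => (v * (genOf A s)⁻¹, s))

lemma mem_Dv_of_fst {v : G} {e : G × ι × Bool} (h : e.1 = v) : e ∈ Dv A v := by
  apply Finset.mem_union_left
  rw [Finset.mem_product]
  exact ⟨by simp [h], Finset.mem_univ _⟩

lemma mem_Dv_of_hd {v : G} {e : G × ι × Bool} (h : e.1 * genOf A e.2 = v) : e ∈ Dv A v := by
  apply Finset.mem_union_right
  rw [Finset.mem_image]
  refine ⟨e.2, Finset.mem_univ _, ?_⟩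
  have : e.1 = v * (genOf A e.2)⁻¹ := by rw [← h]; group
  rw [← this]


lemma filter_fst_eq_of_inter {v : G} {S T : Finset (G × ι × Bool)}
    (h : S ∩ Dv A v = T) :
    S.filter (fun e => e.1 = v) = T.filter (fun e => e.1 = v) := by
  ext e
  rw [Finset.mem_filter, Finset.mem_filter, ← h, Finset.mem_inter]
  constructor
  · rintro ⟨heS, hfst⟩
    exact ⟨⟨heS, mem_Dv_of_fst A hfst⟩, hfst⟩
  · rintro ⟨⟨heS, -⟩, hfst⟩
    exact ⟨heS, hfst⟩

lemma filter_hd_eq_of_inter {v : G} {S T : Finset (G × ι × Bool)}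
    (h : S ∩ Dv A v = T) :
    S.filter (fun e => e.1 * genOf A e.2 = v) = T.filter (fun e => e.1 * genOf A e.2 = v) := by
  ext e
  rw [Finset.mem_filter, Finset.mem_filter, ← h, Finset.mem_inter]
  constructor
  · rintro ⟨heS, hfst⟩
    exact ⟨⟨heS, mem_Dv_of_hd A hfst⟩, hfst⟩
  · rintro ⟨⟨heS, -⟩, hfst⟩
    exact ⟨heS, hfst⟩

/-- the `⇒` direction -/
lemma forward (hiso : ∀ Y : Finset G, Y.Nonempty → Y.card ≤ (bFinset A Y).card) :
    ∃ S : Set (G × ι × Bool),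
      ∀ v : G,
        {e ∈ S | e.1 = v}.Finite ∧
        {e ∈ S | e.1 * genOf A e.2 = v}.Finite ∧
        Nat.card {e ∈ S | e.1 * genOf A e.2 = v} + 1 ≤ Nat.card {e ∈ S | e.1 = v} := by
  have hstage : ∀ F : Finset G, ∃ SF : Finset (G × ι × Bool), ∀ v ∈ F, ex A SF v = 1 := by
    intro F
    obtain ⟨SF, -, hone, -⟩ := stage A hiso F F subset_rfl
    exact ⟨SF, hone⟩
  choose Sfam hSfam using hstage
  haveI : Nonempty (Finset G) := ⟨∅⟩
  have hNB : (Filter.atTop : Filter (Finset G)).NeBot := Filter.atTop_neBot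
  set U : Ultrafilter (Finset G) := Ultrafilter.of Filter.atTop with hU
  refine ⟨{e | {F : Finset G | e ∈ Sfam F} ∈ U}, fun v => ?_⟩
  -- the filter contains some element with a fixed trace on `Dv`
  have hparts : (⋃ T ∈ (↑((Dv A v).powerset) : Set (Finset (G × ι × Bool))),
      {F : Finset G | Sfam F ∩ Dv A v = T}) ∈ U := by
    have huniv : (⋃ T ∈ (↑((Dv A v).powerset) : Set (Finset (G × ι × Bool))),
        {F : Finset G | Sfam F ∩ Dv A v = T}) = Set.univ := by
      ext F
      simp only [Set.mem_iUnion, Set.mem_setOf_eq, Finset.mem_coe, Finset.mem_powerset,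
        Set.mem_univ, iff_true]
      exact ⟨Sfam F ∩ Dv A v, Finset.inter_subset_right, rfl⟩
    rw [huniv]
    exact Filter.univ_mem
  obtain ⟨T, -, hTU⟩ :=
    (Ultrafilter.finite_biUnion_mem_iff (Finset.finite_toSet _)).1 hparts
  have hvU : {F : Finset G | v ∈ F} ∈ U := by
    have hatTop : {F : Finset G | v ∈ F} ∈ (Filter.atTop : Filter (Finset G)) := by
      rw [Filter.mem_atTop_sets]
      exact ⟨{v}, fun b hb => hb (Finset.mem_singleton_self v)⟩
    exact Ultrafilter.of_le Filter.atTop hatTop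
  obtain ⟨F₀, hF₀T, hF₀v⟩ := Ultrafilter.nonempty_of_mem (Filter.inter_mem hTU hvU)
  have hkey : ∀ e ∈ Dv A v, (({F : Finset G | e ∈ Sfam F} ∈ U) ↔ e ∈ T) := by
    intro e heDv
    constructor
    · intro heS
      obtain ⟨F₁, h1, h2⟩ := Ultrafilter.nonempty_of_mem (Filter.inter_mem heS hTU)
      rw [← (h2 : Sfam F₁ ∩ Dv A v = T)]
      exact Finset.mem_inter.2 ⟨h1, heDv⟩
    · intro heT
      refine Filter.mem_of_superset hTU (fun F hF => ?_)
      have : e ∈ Sfam F ∩ Dv A v := (hF : Sfam F ∩ Dv A v = T) ▸ heT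
      exact (Finset.mem_inter.1 this).1
  have hOv : {e ∈ {e | {F : Finset G | e ∈ Sfam F} ∈ U} | e.1 = v}
      = ↑(T.filter (fun e => e.1 = v)) := by
    ext e
    constructor
    · rintro ⟨heU, hfst⟩
      exact Finset.mem_filter.2 ⟨(hkey e (mem_Dv_of_fst A hfst)).1 heU, hfst⟩
    · intro he
      obtain ⟨heT, hfst⟩ := Finset.mem_filter.1 he
      exact ⟨(hkey e (mem_Dv_of_fst A hfst)).2 heT, hfst⟩
  have hIv : {e ∈ {e | {F : Finset G | e ∈ Sfam F} ∈ U} | e.1 * genOf A e.2 = v}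
      = ↑(T.filter (fun e => e.1 * genOf A e.2 = v)) := by
    ext e
    constructor
    · rintro ⟨heU, hfst⟩
      exact Finset.mem_filter.2 ⟨(hkey e (mem_Dv_of_hd A hfst)).1 heU, hfst⟩
    · intro he
      obtain ⟨heT, hfst⟩ := Finset.mem_filter.1 he
      exact ⟨(hkey e (mem_Dv_of_hd A hfst)).2 heT, hfst⟩
  -- the counting condition at `v`
  have hex : ex A (Sfam F₀) v = 1 := hSfam F₀ v hF₀v
  have hfeq1 := filter_fst_eq_of_inter A (hF₀T : Sfam F₀ ∩ Dv A v = T)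
  have hfeq2 := filter_hd_eq_of_inter A (hF₀T : Sfam F₀ ∩ Dv A v = T)
  have hcount : (T.filter (fun e => e.1 * genOf A e.2 = v)).card + 1
      = (T.filter (fun e => e.1 = v)).card := by
    unfold ex outC inC at hex
    rw [hfeq1] at hex
    have : (Finset.filter (fun e => hd A e = v) (Sfam F₀))
        = T.filter (fun e => e.1 * genOf A e.2 = v) := by
      rw [← hfeq2]
      rfl
    rw [this] at hex
    omega
  refine ⟨?_, ?_, ?_⟩
  · rw [hOv]; exact Finset.finite_toSet _
  · rw [hIv]; exact Finset.finite_toSet _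
  · rw [hOv, hIv, Nat.card_coe_set_eq, Nat.card_coe_set_eq,
      Set.ncard_coe_finset, Set.ncard_coe_finset, hcount]

end EvacProof

/-- Let `G` be an infinite group with a finite generating set `A` (with `A`
injective, so the generators are pairwise distinct) and let `Γ = C(G; A)` be its right
Cayley graph. Then `ι*(G; A) ≥ 1` if and only if there exists a set `S` of directed edges
of `Γ` such that every vertex `v` is the initial vertex of only finitely many edges of `S`
and the terminal vertex of only finitely many edges of `S`, and for every vertex `v` the
number of edges of `S` with initial vertex `v` exceeds the number of edges of `S` with
terminal vertex `v` by at least `1`. -/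
theorem cheegerConst_ge_one_iff_exists_edgeSet {G : Type*} [Group G] [Infinite G]
    {ι : Type*} [Fintype ι] (A : ι → G) (hinj : Function.Injective A)
    (hA : Subgroup.closure (Set.range A) = ⊤) :
    1 ≤ cheegerConst A ↔
      ∃ S : Set (G × ι × Bool),
        ∀ v : G,
          {e ∈ S | e.1 = v}.Finite ∧
          {e ∈ S | e.1 * genOf A e.2 = v}.Finite ∧
          Nat.card {e ∈ S | e.1 * genOf A e.2 = v} + 1 ≤ Nat.card {e ∈ S | e.1 = v} := by
  have hbdd : BddBelow (Set.range fun Y : {Y : Finset G // Y.Nonempty} =>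
      (Nat.card (cheegerBoundary A Y.1) : ℝ) / (Y.1.card : ℝ)) := by
    refine ⟨0, ?_⟩
    rintro x ⟨Y, rfl⟩
    positivity
  constructor
  · intro h1
    have hiso : ∀ Y : Finset G, Y.Nonempty → Y.card ≤ (EvacProof.bFinset A Y).card := by
      intro Y hYne
      have hle : cheegerConst A ≤ (Nat.card (cheegerBoundary A Y) : ℝ) / (Y.card : ℝ) :=
        ciInf_le hbdd ⟨Y, hYne⟩
      have hpos : (0 : ℝ) < (Y.card : ℝ) := by
        exact_mod_cast Finset.card_pos.2 hYne
      have h2 : (Y.card : ℝ) ≤ (Nat.card (cheegerBoundary A Y) : ℝ) :=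
        (one_le_div hpos).1 (le_trans h1 hle)
      have h3 : Y.card ≤ Nat.card (cheegerBoundary A Y) := by exact_mod_cast h2
      rwa [EvacProof.natCard_boundary] at h3
    exact EvacProof.forward A hiso
  · rintro ⟨S, hS⟩
    unfold cheegerConst
    haveI : Nonempty {Y : Finset G // Y.Nonempty} := ⟨⟨{1}, Finset.singleton_nonempty 1⟩⟩
    apply le_ciInf
    rintro ⟨Y, hYne⟩
    have hb := EvacProof.backward_bound A S hS Y hYne
    rw [← EvacProof.natCard_boundary] at hb
    have hpos : (0 : ℝ) < (Y.card : ℝ) := by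
      exact_mod_cast Finset.card_pos.2 hYne
    rw [one_le_div hpos]
    exact_mod_cast hb
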